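/- Let n ≥ 2 and 2-n < a < 1. Then for every f ∈ L¹(ℝ^{n-1}) and every λ > 0, the Lebesgue measure of the set {x ∈ ℝⁿ : |P_a f(x)| > λ} is at most 2 c_{n,a}^{1/(n-1)} (‖f‖_{L¹(ℝ^{n-1})}/λ)^{n/(n-1)}; in other words, P_a maps L¹(ℝ^{n-1}) boundedly into weak L^{n/(n-1)}(ℝⁿ) with ‖P_a f‖_{L^{n/(n-1)}_w(ℝⁿ)} ≤ (2^{n-1} c_{n,a})^{1/n} ‖f‖_{L¹(ℝ^{n-1})}. -/

import Mathlib

open MeasureTheory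
open scoped ENNReal

/-- The constant `c_{n,a} = π^{-(n-1)/2} Γ((n-a)/2) / Γ((1-a)/2)`. -/
noncomputable def poissonConst (n : ℕ) (a : ℝ) : ℝ :=
  Real.pi ^ (-(((n : ℝ) - 1) / 2)) * Real.Gamma (((n : ℝ) - a) / 2) / Real.Gamma ((1 - a) / 2)

/-- The kernel `|x_n|^{1-a} (|x'-y|² + x_n²)^{-(n-a)/2}`. -/
noncomputable def poissonKernelA (n : ℕ) (a : ℝ) (x : (Fin (n - 1) → ℝ) × ℝ)
    (y : Fin (n - 1) → ℝ) : ℝ :=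
  |x.2| ^ (1 - a) * ((∑ j, (x.1 j - y j) ^ 2) + x.2 ^ 2) ^ (-(((n : ℝ) - a) / 2))

/-- The Poisson transform `P_a f`. -/
noncomputable def poissonTransform (n : ℕ) (a : ℝ) (f : (Fin (n - 1) → ℝ) → ℂ)
    (x : (Fin (n - 1) → ℝ) × ℝ) : ℂ :=
  (poissonConst n a : ℂ) * ∫ y : Fin (n - 1) → ℝ, (poissonKernelA n a x y : ℂ) * f y

open Real Set

lemma gammaScaled {s c : ℝ} (hs : 0 < s) (hc : 0 < c) :
    ∫⁻ u in Ioi (0:ℝ), ENNReal.ofReal (u ^ (s - 1) * Real.exp (-c * u)) =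
      ENNReal.ofReal (c ^ (-s) * Real.Gamma s) := by
  have h1 : IntegrableOn (fun u : ℝ => u ^ (s - 1) * Real.exp (-c * u)) (Ioi 0) := by
    have := integrableOn_rpow_mul_exp_neg_mul_rpow (s := s - 1) (p := 1)
      (by linarith) one_pos hc
    refine this.congr_fun (fun x hx => ?_) measurableSet_Ioi
    simp only [Real.rpow_one]
  have h2 : ∫ u in Ioi (0:ℝ), u ^ (s - 1) * Real.exp (-c * u) = c ^ (-s) * Real.Gamma s := by
    have := integral_rpow_mul_exp_neg_mul_rpow (p := 1) (q := s - 1) (b := c)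
      one_pos (by linarith) hc
    rw [show ∫ u in Ioi (0:ℝ), u ^ (s - 1) * Real.exp (-c * u)
        = ∫ u in Ioi (0:ℝ), u ^ (s - 1) * Real.exp (-c * u ^ (1:ℝ)) from
      setIntegral_congr_fun measurableSet_Ioi (fun x hx => by rw [Real.rpow_one]), this]
    rw [show -(s - 1 + 1) / 1 = -s by ring, show (s - 1 + 1) / 1 = s by ring]
    ring
  rw [← ofReal_integral_eq_lintegral_ofReal h1 ?_, h2]
  · filter_upwards [ae_restrict_mem measurableSet_Ioi] with x hx
    have : (0:ℝ) < x := hx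
    positivity
open MeasureTheory Real Set
open scoped ENNReal
lemma gaussPi (m : ℕ) {u : ℝ} (hu : 0 < u) :
    ∫⁻ z : Fin m → ℝ, ENNReal.ofReal (Real.exp (-u * ∑ j, z j ^ 2)) =
      ENNReal.ofReal ((π / u) ^ ((m : ℝ) / 2)) := by
  have hrw : ∀ z : Fin m → ℝ, Real.exp (-u * ∑ j, z j ^ 2) = ∏ j, Real.exp (-u * z j ^ 2) := by
    intro z
    rw [← Real.exp_sum, Finset.mul_sum]
  have hint : Integrable (fun x : ℝ => Real.exp (-u * x ^ 2)) := integrable_exp_neg_mul_sq hu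
  calc ∫⁻ z : Fin m → ℝ, ENNReal.ofReal (Real.exp (-u * ∑ j, z j ^ 2))
      = ∫⁻ z : Fin m → ℝ, ENNReal.ofReal (∏ j, Real.exp (-u * z j ^ 2)) := by
        simp_rw [hrw]
    _ = ENNReal.ofReal (∫ z : Fin m → ℝ, ∏ j, Real.exp (-u * z j ^ 2)) := by
        rw [volume_pi, ofReal_integral_eq_lintegral_ofReal
          (Integrable.fintype_prod (f := fun _ : Fin m => fun x : ℝ => Real.exp (-u * x ^ 2))
            (fun _ => hint))
          (Filter.Eventually.of_forall (fun z => Finset.prod_nonneg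
            (fun j _ => (Real.exp_pos _).le)))]
    _ = ENNReal.ofReal ((π / u) ^ ((m : ℝ) / 2)) := by
        rw [volume_pi, MeasureTheory.integral_fintype_prod_eq_pow (ι := Fin m)
          (fun x : ℝ => Real.exp (-u * x ^ 2)), integral_gaussian]
        congr 1
        rw [show √(π / u) = (π / u) ^ ((1:ℝ)/2) from Real.sqrt_eq_rpow _, Fintype.card_fin,
          ← Real.rpow_natCast ((π / u) ^ ((1:ℝ)/2)) m, ← Real.rpow_mul (by positivity)]
        congr 1
        ring
open MeasureTheory Real Set
open scoped ENNReal
lemma sumSq_measurable (m : ℕ) : Measurable fun z : Fin m → ℝ => ∑ j, z j ^ 2 :=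
  (Finset.measurable_sum Finset.univ fun j _ => ((measurable_pi_apply j).pow_const 2))
lemma lemmaA (m : ℕ) {s : ℝ} (hs : (m : ℝ) / 2 < s) {t : ℝ} (ht : t ≠ 0) :
    ∫⁻ z : Fin m → ℝ, ENNReal.ofReal (((∑ j, z j ^ 2) + t ^ 2) ^ (-s)) =
      ENNReal.ofReal (π ^ ((m : ℝ) / 2) * ((t ^ 2) ^ ((m : ℝ) / 2 - s) *
        Real.Gamma (s - (m : ℝ) / 2)) / Real.Gamma s) := by
  have hs0 : 0 < s := lt_of_le_of_lt (by positivity) hs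
  have hGs : 0 < Real.Gamma s := Real.Gamma_pos_of_pos hs0
  have ht2 : (0:ℝ) < t ^ 2 := by positivity
  have hc : ∀ z : Fin m → ℝ, (0:ℝ) < (∑ j, z j ^ 2) + t ^ 2 := by
    intro z
    have : (0:ℝ) ≤ ∑ j, z j ^ 2 := Finset.sum_nonneg fun j _ => sq_nonneg _
    linarith
  -- joint measurability for the swap
  have hmeas : Measurable (Function.uncurry fun (z : Fin m → ℝ) (u : ℝ) =>
      ENNReal.ofReal (u ^ (s - 1) * Real.exp (-(((∑ j, z j ^ 2) + t ^ 2)) * u))) := by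
    apply ENNReal.measurable_ofReal.comp
    apply Measurable.mul
    · fun_prop
    · exact (((((sumSq_measurable m).comp measurable_fst).add_const _).neg.mul
        measurable_snd).exp)
  have key : (∫⁻ z : Fin m → ℝ, ENNReal.ofReal (((∑ j, z j ^ 2) + t ^ 2) ^ (-s))) *
      ENNReal.ofReal (Real.Gamma s) =
      ENNReal.ofReal (π ^ ((m : ℝ) / 2) * ((t ^ 2) ^ ((m : ℝ) / 2 - s) *
        Real.Gamma (s - (m : ℝ) / 2))) := by
    rw [← lintegral_mul_const' _ _ ENNReal.ofReal_ne_top]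
    calc ∫⁻ z : Fin m → ℝ, ENNReal.ofReal (((∑ j, z j ^ 2) + t ^ 2) ^ (-s)) *
          ENNReal.ofReal (Real.Gamma s)
        = ∫⁻ z : Fin m → ℝ, ∫⁻ u in Ioi (0:ℝ),
            ENNReal.ofReal (u ^ (s - 1) * Real.exp (-(((∑ j, z j ^ 2) + t ^ 2)) * u)) := by
          refine lintegral_congr fun z => ?_
          rw [gammaScaled hs0 (hc z), ENNReal.ofReal_mul (by positivity)]
    _ = ∫⁻ u in Ioi (0:ℝ), ∫⁻ z : Fin m → ℝ,
            ENNReal.ofReal (u ^ (s - 1) * Real.exp (-(((∑ j, z j ^ 2) + t ^ 2)) * u)) :=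
          lintegral_lintegral_swap hmeas.aemeasurable
    _ = ∫⁻ u in Ioi (0:ℝ),
          ENNReal.ofReal (π ^ ((m : ℝ) / 2) * (u ^ ((s - (m:ℝ)/2) - 1) * Real.exp (-(t^2) * u))) := by
          refine setLIntegral_congr_fun measurableSet_Ioi
            (fun u hu => ?_)
          have hu : (0:ℝ) < u := hu
          have step : ∀ z : Fin m → ℝ,
              ENNReal.ofReal (u ^ (s - 1) * Real.exp (-(((∑ j, z j ^ 2) + t ^ 2)) * u)) =
              ENNReal.ofReal (u ^ (s - 1) * Real.exp (-(t^2) * u)) *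
                ENNReal.ofReal (Real.exp (-u * ∑ j, z j ^ 2)) := by
            intro z
            rw [← ENNReal.ofReal_mul (by positivity)]
            congr 1
            rw [mul_assoc, ← Real.exp_add]
            ring_nf
          simp_rw [step]
          rw [lintegral_const_mul' _ _ ENNReal.ofReal_ne_top, gaussPi m hu,
            ← ENNReal.ofReal_mul (by positivity)]
          congr 1
          have hrw2 : u ^ ((s - (m:ℝ)/2) - 1) = u ^ (s - 1) * (u ^ ((m:ℝ)/2))⁻¹ := by
            rw [← Real.rpow_neg hu.le, ← Real.rpow_add hu]
            congr 1
            ring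
          have hup : (0:ℝ) < u ^ ((m:ℝ)/2) := Real.rpow_pos_of_pos hu _
          rw [Real.div_rpow pi_pos.le hu.le, hrw2]
          field_simp
    _ = ENNReal.ofReal (π ^ ((m : ℝ) / 2)) * ∫⁻ u in Ioi (0:ℝ),
          ENNReal.ofReal (u ^ ((s - (m:ℝ)/2) - 1) * Real.exp (-(t^2) * u)) := by
          rw [← lintegral_const_mul' _ _ ENNReal.ofReal_ne_top]
          refine lintegral_congr fun u => ?_
          rw [← ENNReal.ofReal_mul (by positivity)]
    _ = ENNReal.ofReal (π ^ ((m : ℝ) / 2) * ((t ^ 2) ^ ((m : ℝ) / 2 - s) *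
          Real.Gamma (s - (m : ℝ) / 2))) := by
          rw [gammaScaled (by linarith) ht2, ← ENNReal.ofReal_mul (by positivity)]
          rw [show -(s - (m:ℝ)/2) = (m:ℝ)/2 - s by ring]
  -- now divide by Gamma s
  have hG0 : ENNReal.ofReal (Real.Gamma s) ≠ 0 := by
    simp [ENNReal.ofReal_eq_zero, not_le, hGs]
  calc ∫⁻ z : Fin m → ℝ, ENNReal.ofReal (((∑ j, z j ^ 2) + t ^ 2) ^ (-s))
      = (∫⁻ z : Fin m → ℝ, ENNReal.ofReal (((∑ j, z j ^ 2) + t ^ 2) ^ (-s))) *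
        (ENNReal.ofReal (Real.Gamma s) * (ENNReal.ofReal (Real.Gamma s))⁻¹) := by
        rw [ENNReal.mul_inv_cancel hG0 ENNReal.ofReal_ne_top, mul_one]
    _ = ENNReal.ofReal (π ^ ((m : ℝ) / 2) * ((t ^ 2) ^ ((m : ℝ) / 2 - s) *
          Real.Gamma (s - (m : ℝ) / 2))) * (ENNReal.ofReal (Real.Gamma s))⁻¹ := by
        rw [← mul_assoc, key]
    _ = ENNReal.ofReal (π ^ ((m : ℝ) / 2) * ((t ^ 2) ^ ((m : ℝ) / 2 - s) *
          Real.Gamma (s - (m : ℝ) / 2)) / Real.Gamma s) := by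
        rw [ENNReal.ofReal_div_of_pos hGs]
        exact (div_eq_mul_inv _ _).symm


lemma normKernel (n : ℕ) (hn : 2 ≤ n) {a : ℝ} (ha1 : 2 - (n:ℝ) < a) (ha2 : a < 1)
    {t : ℝ} (ht : t ≠ 0) :
    ENNReal.ofReal (poissonConst n a) * ∫⁻ z : Fin (n-1) → ℝ,
      ENNReal.ofReal (|t| ^ (1 - a) * ((∑ j, z j ^ 2) + t ^ 2) ^ (-(((n:ℝ) - a)/2))) = 1 := by
  have hn2 : (2:ℝ) ≤ (n:ℝ) := by exact_mod_cast hn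
  have hm : ((n - 1 : ℕ) : ℝ) = (n : ℝ) - 1 := by
    rw [Nat.cast_sub (by omega), Nat.cast_one]
  have hs : ((n - 1 : ℕ) : ℝ)/2 < ((n:ℝ) - a)/2 := by rw [hm]; linarith
  have hcpos : 0 < poissonConst n a :=
    div_pos (mul_pos (Real.rpow_pos_of_pos pi_pos _)
      (Real.Gamma_pos_of_pos (by linarith))) (Real.Gamma_pos_of_pos (by linarith))
  simp_rw [ENNReal.ofReal_mul (Real.rpow_nonneg (abs_nonneg t) _)]
  rw [lintegral_const_mul' _ _ ENNReal.ofReal_ne_top, lemmaA (n-1) hs ht,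
    ← ENNReal.ofReal_mul (Real.rpow_nonneg (abs_nonneg t) _),
    ← ENNReal.ofReal_mul hcpos.le]
  rw [show (1:ℝ≥0∞) = ENNReal.ofReal 1 by simp]
  congr 1
  have he1 : ((n - 1 : ℕ) : ℝ)/2 - ((n:ℝ) - a)/2 = (a-1)/2 := by rw [hm]; ring
  have he2 : ((n:ℝ) - a)/2 - ((n - 1 : ℕ) : ℝ)/2 = (1-a)/2 := by rw [hm]; ring
  rw [he1, he2]
  set P1 := π ^ (-(((n:ℝ) - 1)/2)) with hP1
  set P2 := π ^ (((n - 1 : ℕ) : ℝ)/2) with hP2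
  set G1 := Real.Gamma ((1 - a)/2) with hG1
  set G2 := Real.Gamma (((n:ℝ) - a)/2) with hG2
  have hG1p : 0 < G1 := Real.Gamma_pos_of_pos (by linarith)
  have hG2p : 0 < G2 := Real.Gamma_pos_of_pos (by linarith)
  have e1 : P1 * P2 = 1 := by
    rw [hP1, hP2, hm, ← Real.rpow_add pi_pos]
    norm_num
  have habs : (t^2 : ℝ) = |t| ^ (2:ℝ) := by
    rw [show (2:ℝ) = ((2:ℕ):ℝ) by norm_num, Real.rpow_natCast]
    exact (sq_abs t).symm
  have e2 : |t| ^ (1-a) * (t^2) ^ ((a-1)/2) = 1 := by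
    rw [habs, ← Real.rpow_mul (abs_nonneg t), ← Real.rpow_add (abs_pos.2 ht),
      show 1 - a + 2 * ((a-1)/2) = 0 by ring, Real.rpow_zero]
  unfold poissonConst
  rw [← hP1, ← hG1, ← hG2]
  field_simp
  linear_combination (P1*P2) * e2 + e1

lemma kernel_measurable (n : ℕ) (a : ℝ) :
    Measurable fun p : (((Fin (n-1) → ℝ) × ℝ) × (Fin (n-1) → ℝ)) =>
      ENNReal.ofReal (poissonKernelA n a p.1 p.2) := by
  unfold poissonKernelA
  apply ENNReal.measurable_ofReal.comp
  have hr1 : Measurable fun x : ℝ => x ^ (1 - a) := by fun_prop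
  have hr2 : Measurable fun x : ℝ => x ^ (-(((n:ℝ) - a)/2)) := by fun_prop
  have hb : Measurable fun p : (((Fin (n-1) → ℝ) × ℝ) × (Fin (n-1) → ℝ)) =>
      (∑ j, (p.1.1 j - p.2 j) ^ 2) + p.1.2 ^ 2 := by
    apply Measurable.add
    · exact Finset.measurable_sum _ fun j _ =>
        (((measurable_pi_apply j).comp (measurable_fst.comp measurable_fst)).sub
          ((measurable_pi_apply j).comp measurable_snd)).pow_const 2
    · exact (measurable_fst.snd).pow_const 2
  exact (hr1.comp (measurable_fst.snd).abs).mul (hr2.comp hb)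

lemma sliceIntegral (n : ℕ) {a : ℝ} {t : ℝ}
    (g : (Fin (n-1) → ℝ) → ℂ) (hgm : Measurable g) :
    (∫⁻ x' : Fin (n-1) → ℝ, ∫⁻ y, ENNReal.ofReal (poissonKernelA n a (x', t) y) *
        (‖g y‖₊ : ℝ≥0∞)) =
      (∫⁻ z : Fin (n-1) → ℝ, ENNReal.ofReal (|t| ^ (1 - a) *
          ((∑ j, z j ^ 2) + t ^ 2) ^ (-(((n:ℝ) - a)/2)))) * ∫⁻ y, (‖g y‖₊ : ℝ≥0∞) := by
  have hum : Measurable (Function.uncurry fun (x' : Fin (n-1) → ℝ) (y : Fin (n-1) → ℝ) =>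
      ENNReal.ofReal (poissonKernelA n a (x', t) y) * (‖g y‖₊ : ℝ≥0∞)) := by
    exact ((kernel_measurable n a).comp
      (((measurable_fst.prodMk measurable_const)).prodMk measurable_snd)).mul
      (hgm.enorm.comp measurable_snd)
  rw [lintegral_lintegral_swap hum.aemeasurable]
  have inner_eq : ∀ y : Fin (n-1) → ℝ,
      (∫⁻ x' : Fin (n-1) → ℝ, ENNReal.ofReal (poissonKernelA n a (x', t) y)) =
      ∫⁻ z : Fin (n-1) → ℝ, ENNReal.ofReal (|t| ^ (1 - a) *
        ((∑ j, z j ^ 2) + t ^ 2) ^ (-(((n:ℝ) - a)/2))) := by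
    intro y
    have := lintegral_add_right_eq_self (μ := volume)
      (f := fun z : Fin (n-1) → ℝ => ENNReal.ofReal (|t| ^ (1 - a) *
        ((∑ j, z j ^ 2) + t ^ 2) ^ (-(((n:ℝ) - a)/2)))) (-y)
    rw [← this]
    refine lintegral_congr fun x' => ?_
    unfold poissonKernelA
    simp [sub_eq_add_neg]
  calc ∫⁻ y, ∫⁻ x' : Fin (n-1) → ℝ, ENNReal.ofReal (poissonKernelA n a (x', t) y) *
        (‖g y‖₊ : ℝ≥0∞)
      = ∫⁻ y, (∫⁻ z : Fin (n-1) → ℝ, ENNReal.ofReal (|t| ^ (1 - a) *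
          ((∑ j, z j ^ 2) + t ^ 2) ^ (-(((n:ℝ) - a)/2)))) * (‖g y‖₊ : ℝ≥0∞) := by
        refine lintegral_congr fun y => ?_
        rw [lintegral_mul_const' _ _ ENNReal.coe_ne_top, inner_eq y]
    _ = _ := lintegral_const_mul _ hgm.enorm

/-- For `n ≥ 2` and `2-n < a < 1`, `P_a` maps `L¹(ℝ^{n-1})` into weak `L^{n/(n-1)}(ℝⁿ)`:
for `f ∈ L¹` and `λ > 0`, the measure of `{|P_a f| > λ}` is at most
`2 c_{n,a}^{1/(n-1)} (‖f‖₁/λ)^{n/(n-1)}`. -/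
theorem statement1 (n : ℕ) (hn : 2 ≤ n) (a : ℝ) (ha1 : 2 - (n : ℝ) < a) (ha2 : a < 1)
    (f : (Fin (n - 1) → ℝ) → ℂ) (hf : Integrable f volume) (lam : ℝ) (hlam : 0 < lam) :
    volume {x : (Fin (n - 1) → ℝ) × ℝ | lam < ‖poissonTransform n a f x‖} ≤
      ENNReal.ofReal (2 * poissonConst n a ^ (1 / ((n : ℝ) - 1)) *
        ((∫ y, ‖f y‖) / lam) ^ ((n : ℝ) / ((n : ℝ) - 1))) := by
  have hn2 : (2:ℝ) ≤ (n:ℝ) := by exact_mod_cast hn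
  have hν : (0:ℝ) < (n:ℝ) - 1 := by linarith
  have hΓ1 : 0 < Real.Gamma ((1-a)/2) := Real.Gamma_pos_of_pos (by linarith)
  have hΓ2 : 0 < Real.Gamma (((n:ℝ)-a)/2) := Real.Gamma_pos_of_pos (by linarith)
  have hc : 0 < poissonConst n a :=
    div_pos (mul_pos (Real.rpow_pos_of_pos pi_pos _) hΓ2) hΓ1
  set c := poissonConst n a with hcdef
  set N := ∫ y, ‖f y‖ with hNdef
  have hN : 0 ≤ N := integral_nonneg fun y => norm_nonneg _
  set t₀ := (c * N / lam) ^ (1/((n:ℝ)-1)) with ht₀def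
  have ht₀ : 0 ≤ t₀ := Real.rpow_nonneg (by positivity) _
  obtain ⟨g, hgm, hfg⟩ : ∃ g, Measurable g ∧ f =ᵐ[volume] g :=
    ⟨hf.1.mk f, hf.1.measurable_mk, hf.1.ae_eq_mk⟩
  have hg_int : Integrable g := hf.congr hfg
  have hNg : ∫⁻ y, (‖g y‖₊ : ℝ≥0∞) = ENNReal.ofReal N := by
    have h1 : ∫ y, ‖g y‖ = N := (integral_congr_ae (hfg.mono fun y hy => by rw [hy])).symm
    rw [← h1, ofReal_integral_eq_lintegral_ofReal hg_int.norm
      (Filter.Eventually.of_forall fun y => norm_nonneg _)]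
    simp_rw [ofReal_norm, enorm_eq_nnnorm]
  have hK0 : ∀ x y, 0 ≤ poissonKernelA n a x y := fun x y =>
    mul_nonneg (Real.rpow_nonneg (abs_nonneg _) _) (Real.rpow_nonneg
      (by positivity : (0:ℝ) ≤ (∑ j, (x.1 j - y j) ^ 2) + x.2 ^ 2) _)
  set φ : (Fin (n-1) → ℝ) × ℝ → ℝ≥0∞ :=
    fun x => ENNReal.ofReal c *
      ∫⁻ y, ENNReal.ofReal (poissonKernelA n a x y) * (‖g y‖₊ : ℝ≥0∞) with hφdef
  have hφm : Measurable φ :=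
    (Measurable.lintegral_prod_right'
      ((kernel_measurable n a).mul (hgm.enorm.comp measurable_snd))).const_mul _
  have hPφ : ∀ x, (‖poissonTransform n a f x‖₊ : ℝ≥0∞) ≤ φ x := by
    intro x
    unfold poissonTransform
    rw [nnnorm_mul, ENNReal.coe_mul]
    have hcc : (‖(c:ℂ)‖₊ : ℝ≥0∞) = ENNReal.ofReal c := by
      rw [← enorm_eq_nnnorm, ← ofReal_norm, Complex.norm_real, Real.norm_of_nonneg hc.le]
    rw [hcc]
    refine mul_le_mul_right ?_ _
    calc (‖∫ y, (poissonKernelA n a x y : ℂ) * f y‖₊ : ℝ≥0∞)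
        ≤ ∫⁻ y, ‖(poissonKernelA n a x y : ℂ) * f y‖₊ :=
          enorm_integral_le_lintegral_enorm _
      _ = ∫⁻ y, ENNReal.ofReal (poissonKernelA n a x y) * (‖f y‖₊ : ℝ≥0∞) := by
          refine lintegral_congr fun y => ?_
          rw [nnnorm_mul, ENNReal.coe_mul]
          congr 1
          rw [← enorm_eq_nnnorm, ← ofReal_norm, Complex.norm_real,
            Real.norm_of_nonneg (hK0 x y)]
      _ = ∫⁻ y, ENNReal.ofReal (poissonKernelA n a x y) * (‖g y‖₊ : ℝ≥0∞) :=
          lintegral_congr_ae (hfg.mono fun y hy => by simp only [hy])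
  set T := {x : (Fin (n-1) → ℝ) × ℝ | ENNReal.ofReal lam ≤ φ x} with hT
  have hST : {x : (Fin (n-1) → ℝ) × ℝ | lam < ‖poissonTransform n a f x‖} ⊆ T := by
    intro x hx
    have h1 : ENNReal.ofReal lam ≤ ENNReal.ofReal ‖poissonTransform n a f x‖ :=
      ENNReal.ofReal_le_ofReal (le_of_lt hx)
    rw [ofReal_norm] at h1
    exact h1.trans (hPφ x)
  have hTmeas : MeasurableSet T := measurableSet_le measurable_const hφm
  refine le_trans (measure_mono hST) ?_
  rw [Measure.volume_eq_prod, Measure.prod_apply_symm hTmeas]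
  have hslice_le : ∀ t : ℝ, volume ((fun x' => (x', t)) ⁻¹' T) ≤ ENNReal.ofReal (N / lam) := by
    intro t
    by_cases ht : t = 0
    · have hempty : ((fun x' : Fin (n-1) → ℝ => (x', t)) ⁻¹' T) = ∅ := by
        refine eq_empty_iff_forall_notMem.mpr fun x' hx' => ?_
        have hφ0 : φ (x', t) = 0 := by
          rw [hφdef]
          simp only []
          have : ∀ y, poissonKernelA n a ((x', t)) y = 0 := by
            intro y
            unfold poissonKernelA
            rw [ht]
            simp [Real.zero_rpow (by linarith : (1:ℝ) - a ≠ 0)]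
          have h2 : ∫⁻ y, ENNReal.ofReal (poissonKernelA n a (x', t) y) * (‖g y‖₊ : ℝ≥0∞) = 0 := by
            simp_rw [this]
            simp
          rw [h2, mul_zero]
        have : ENNReal.ofReal lam ≤ 0 := hφ0 ▸ hx'
        simp only [nonpos_iff_eq_zero, ENNReal.ofReal_eq_zero] at this
        linarith
      rw [hempty, measure_empty]
      exact bot_le
    · have hmA : AEMeasurable (fun x' : Fin (n-1) → ℝ => φ (x', t)) volume :=
        (hφm.comp (measurable_id.prodMk measurable_const)).aemeasurable
      have markov := mul_meas_ge_le_lintegral₀ hmA (ENNReal.ofReal lam)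
      have htot : ∫⁻ x' : Fin (n-1) → ℝ, φ (x', t) = ENNReal.ofReal N := by
        calc ∫⁻ x' : Fin (n-1) → ℝ, φ (x', t)
            = ENNReal.ofReal c * ∫⁻ x' : Fin (n-1) → ℝ, ∫⁻ y,
                ENNReal.ofReal (poissonKernelA n a (x', t) y) * (‖g y‖₊ : ℝ≥0∞) :=
              lintegral_const_mul' _ _ ENNReal.ofReal_ne_top
          _ = ENNReal.ofReal c * ((∫⁻ z : Fin (n-1) → ℝ, ENNReal.ofReal (|t| ^ (1 - a) *
                ((∑ j, z j ^ 2) + t ^ 2) ^ (-(((n:ℝ) - a)/2)))) * ∫⁻ y, (‖g y‖₊ : ℝ≥0∞)) := by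
              rw [sliceIntegral n g hgm]
          _ = (ENNReal.ofReal c * ∫⁻ z : Fin (n-1) → ℝ, ENNReal.ofReal (|t| ^ (1 - a) *
                ((∑ j, z j ^ 2) + t ^ 2) ^ (-(((n:ℝ) - a)/2)))) * ∫⁻ y, (‖g y‖₊ : ℝ≥0∞) :=
              (mul_assoc _ _ _).symm
          _ = ENNReal.ofReal N := by
              rw [normKernel n hn ha1 ha2 ht, hNg, one_mul]
      have h2 : volume ((fun x' : Fin (n-1) → ℝ => (x', t)) ⁻¹' T) * ENNReal.ofReal lam ≤
          ENNReal.ofReal N := by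
        rw [mul_comm]
        exact le_trans (le_of_eq rfl) (htot ▸ markov)
      rw [ENNReal.ofReal_div_of_pos hlam]
      exact (ENNReal.le_div_iff_mul_le (Or.inl (ne_of_gt (ENNReal.ofReal_pos.2 hlam)))
        (Or.inl ENNReal.ofReal_ne_top)).mpr h2
  have hslice_empty : ∀ t : ℝ, t₀ < |t| → volume ((fun x' => (x', t)) ⁻¹' T) = 0 := by
    intro t hlt
    have ht : t ≠ 0 := by
      intro h
      rw [h, abs_zero] at hlt
      exact absurd hlt (not_lt.2 ht₀)
    have htpos : (0:ℝ) < |t| := abs_pos.2 ht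
    have habs : (t^2 : ℝ) = |t| ^ (2:ℝ) := by
      rw [show (2:ℝ) = ((2:ℕ):ℝ) by norm_num, Real.rpow_natCast]
      exact (sq_abs t).symm
    have hKb : ∀ x' y, poissonKernelA n a ((x', t)) y ≤ |t| ^ ((1:ℝ) - n) := by
      intro x' y
      unfold poissonKernelA
      have hb1 : (0:ℝ) < t ^ 2 := by positivity
      have hb2 : (t:ℝ)^2 ≤ (∑ j, (x' j - y j) ^ 2) + t ^ 2 := by
        have : (0:ℝ) ≤ ∑ j, (x' j - y j) ^ 2 := Finset.sum_nonneg fun j _ => sq_nonneg _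
        linarith
      have hexp : (-(((n:ℝ) - a)/2)) ≤ 0 := by linarith
      have h3 : ((∑ j, (x' j - y j) ^ 2) + t ^ 2) ^ (-(((n:ℝ) - a)/2)) ≤
          (t^2) ^ (-(((n:ℝ) - a)/2)) := Real.rpow_le_rpow_of_nonpos hb1 hb2 hexp
      calc |t| ^ (1 - a) * ((∑ j, (x' j - y j) ^ 2) + t ^ 2) ^ (-(((n:ℝ) - a)/2))
          ≤ |t| ^ (1 - a) * (t^2) ^ (-(((n:ℝ) - a)/2)) := by
            exact mul_le_mul_of_nonneg_left h3 (Real.rpow_nonneg (abs_nonneg t) _)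
        _ = |t| ^ ((1:ℝ) - n) := by
            rw [habs, ← Real.rpow_mul (abs_nonneg t), ← Real.rpow_add htpos]
            congr 1
            ring
    have hb : ∀ x', φ (x', t) ≤ ENNReal.ofReal (c * (|t| ^ ((1:ℝ) - n) * N)) := by
      intro x'
      rw [hφdef]
      simp only []
      calc ENNReal.ofReal c * ∫⁻ y, ENNReal.ofReal (poissonKernelA n a (x', t) y) *
            (‖g y‖₊ : ℝ≥0∞)
          ≤ ENNReal.ofReal c * ∫⁻ y, ENNReal.ofReal (|t| ^ ((1:ℝ) - n)) *
            (‖g y‖₊ : ℝ≥0∞) := by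
            refine mul_le_mul_right (lintegral_mono fun y => ?_) _
            exact mul_le_mul_left (ENNReal.ofReal_le_ofReal (hKb x' y)) _
        _ = ENNReal.ofReal c * (ENNReal.ofReal (|t| ^ ((1:ℝ) - n)) * ENNReal.ofReal N) := by
            rw [lintegral_const_mul' _ _ ENNReal.ofReal_ne_top, hNg]
        _ = ENNReal.ofReal (c * (|t| ^ ((1:ℝ) - n) * N)) := by
            rw [← ENNReal.ofReal_mul (Real.rpow_nonneg (abs_nonneg t) _),
              ← ENNReal.ofReal_mul hc.le]
    have hstrict : c * (|t| ^ ((1:ℝ) - n) * N) < lam := by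
      have hpow : t₀ ^ ((n:ℝ) - 1) = c * N / lam := by
        rw [ht₀def, ← Real.rpow_mul (by positivity), one_div,
          inv_mul_cancel₀ (ne_of_gt hν), Real.rpow_one]
      have h1 : c * N / lam < |t| ^ ((n:ℝ) - 1) := by
        rw [← hpow]
        exact Real.rpow_lt_rpow ht₀ hlt hν
      have h2 : |t| ^ ((1:ℝ) - n) = (|t| ^ ((n:ℝ) - 1))⁻¹ := by
        rw [← Real.rpow_neg (abs_nonneg t)]
        congr 1
        ring
      have h3 : (0:ℝ) < |t| ^ ((n:ℝ) - 1) := Real.rpow_pos_of_pos htpos _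
      rw [h2]
      rw [div_lt_iff₀ hlam] at h1
      calc c * ((|t| ^ ((n:ℝ) - 1))⁻¹ * N) = c * N / |t| ^ ((n:ℝ) - 1) := by ring
        _ < lam := by
          rw [div_lt_iff₀ h3]
          linarith [h1]
    have hempty : ((fun x' : Fin (n-1) → ℝ => (x', t)) ⁻¹' T) = ∅ := by
      refine eq_empty_iff_forall_notMem.mpr fun x' hx' => ?_
      have hlt2 : φ (x', t) < ENNReal.ofReal lam :=
        lt_of_le_of_lt (hb x') ((ENNReal.ofReal_lt_ofReal_iff hlam).2 hstrict)
      exact absurd (hx' : ENNReal.ofReal lam ≤ φ (x', t)) (not_le.2 hlt2)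
    rw [hempty, measure_empty]
  calc ∫⁻ t, volume ((fun x' => (x', t)) ⁻¹' T)
      ≤ ∫⁻ t, (Icc (-t₀) t₀).indicator (fun _ => ENNReal.ofReal (N / lam)) t := by
        refine lintegral_mono fun t => ?_
        by_cases h : t ∈ Icc (-t₀) t₀
        · rw [indicator_of_mem h]
          exact hslice_le t
        · rw [indicator_of_notMem h,
            hslice_empty t (lt_of_not_ge fun hle => h (abs_le.mp hle))]
    _ = ENNReal.ofReal (N / lam) * volume (Icc (-t₀) t₀) :=
        lintegral_indicator_const measurableSet_Icc _
    _ ≤ ENNReal.ofReal (2 * c ^ (1 / ((n:ℝ) - 1)) * (N / lam) ^ ((n:ℝ) / ((n:ℝ) - 1))) := by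
        rw [Real.volume_Icc, ← ENNReal.ofReal_mul (by positivity)]
        apply ENNReal.ofReal_le_ofReal
        apply le_of_eq
        have ht₀eq : t₀ = c ^ (1/((n:ℝ)-1)) * (N / lam) ^ (1/((n:ℝ)-1)) := by
          rw [ht₀def, mul_div_assoc, Real.mul_rpow hc.le (by positivity)]
        rcases eq_or_lt_of_le (div_nonneg hN hlam.le) with hr | hr
        · rw [← hr, Real.zero_rpow (ne_of_gt (div_pos (by linarith : (0:ℝ) < (n:ℝ)) hν))]
          ring
        · have hsum : (N / lam) ^ ((1:ℝ)/((n:ℝ)-1)) * (N / lam) =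
              (N / lam) ^ ((n:ℝ)/((n:ℝ)-1)) := by
            nth_rewrite 2 [show (N / lam) = (N / lam) ^ (1:ℝ) by rw [Real.rpow_one]]
            rw [← Real.rpow_add hr]
            congr 1
            field_simp
            ring
          rw [ht₀eq]
          calc N / lam * (c ^ (1/((n:ℝ)-1)) * (N / lam) ^ (1/((n:ℝ)-1)) -
                -(c ^ (1/((n:ℝ)-1)) * (N / lam) ^ (1/((n:ℝ)-1))))
              = 2 * c ^ (1/((n:ℝ)-1)) * ((N / lam) ^ ((1:ℝ)/((n:ℝ)-1)) * (N / lam)) := by ring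
            _ = 2 * c ^ (1 / ((n:ℝ) - 1)) * (N / lam) ^ ((n:ℝ) / ((n:ℝ) - 1)) := by
                rw [hsum]
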